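/- Let G be a group with homomorphism deg : G → ℤ, let K be a field, and let χ : G → K^× be a homomorphism such that χ(ker(deg)) is finite. Then there exists a ∈ \overline{K}^× (in an algebraic closure of K) and a positive integer n such that the twisted character g ↦ χ(g)·a^{deg(g)} has n-th power trivial, i.e. (χ(g)·a^{deg(g)})^n = 1 for all g ∈ G. -/
import Mathlib

theorem finite_after_twist {G K : Type*} [Group G] [Field K]
    (deg : G → ℤ) (hdeg : ∀ a b : G, deg (a * b) = deg a + deg b)
    (χ : G →* Kˣ)
    (hfin : (χ '' {g : G | deg g = 0}).Finite) :
    ∃ (a : (AlgebraicClosure K)ˣ) (n : ℕ), 0 < n ∧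
      ∀ g : G,
        ((Units.map (algebraMap K (AlgebraicClosure K)).toMonoidHom (χ g)) *
            a ^ (deg g)) ^ n = 1 := by
  classical
  set L := AlgebraicClosure K
  set ι : Kˣ →* Lˣ := Units.map (algebraMap K L).toMonoidHom with hι
  -- basic facts about deg
  have h1 : deg 1 = 0 := by have := hdeg 1 1; simp only [mul_one] at this; omega
  have hinv : ∀ g : G, deg g⁻¹ = -deg g := by
    intro g
    have := hdeg g g⁻¹
    rw [mul_inv_cancel, h1] at this
    omega
  have hpow : ∀ (g : G) (k : ℕ), deg (g ^ k) = k * deg g := by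
    intro g k
    induction k with
    | zero => simpa using h1
    | succ n ih => rw [pow_succ, hdeg, ih]; push_cast; ring
  have hzpow : ∀ (g : G) (k : ℤ), deg (g ^ k) = k * deg g := by
    intro g k
    cases k with
    | ofNat n => simpa using hpow g n
    | negSucc n =>
        rw [zpow_negSucc, hinv, hpow, Int.negSucc_eq]
        push_cast; ring
  -- the kernel subgroup and finiteness of its image
  let N : Subgroup G :=
    { carrier := {g | deg g = 0}
      one_mem' := h1
      mul_mem' := by
        intro a b ha hb
        simp only [Set.mem_setOf_eq] at *
        rw [hdeg]; omega
      inv_mem' := by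
        intro a ha
        simp only [Set.mem_setOf_eq] at *
        rw [hinv]; omega }
  let H : Subgroup Kˣ := (χ.comp N.subtype).range
  have hHset : (H : Set Kˣ) = χ '' {g : G | deg g = 0} := by
    ext x
    constructor
    · rintro ⟨⟨g, hg⟩, rfl⟩
      exact ⟨g, hg, rfl⟩
    · rintro ⟨g, hg, rfl⟩
      exact ⟨⟨g, hg⟩, rfl⟩
  have hHfin : Finite H := by
    have : (H : Set Kˣ).Finite := by rw [hHset]; exact hfin
    exact this.to_subtype
  set m := Nat.card H with hm
  have hmpos : 0 < m := Nat.card_pos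
  have hmkill : ∀ g : G, deg g = 0 → (χ g) ^ m = 1 := by
    intro g hg
    have hx : χ g ∈ H := ⟨⟨g, hg⟩, rfl⟩
    have : (⟨χ g, hx⟩ : H) ^ m = 1 := pow_card_eq_one'
    have := congrArg (Subtype.val) this
    simpa using this
  -- the image of deg is cyclic
  let D : AddSubgroup ℤ :=
    { carrier := Set.range deg
      zero_mem' := ⟨1, h1⟩
      add_mem' := by
        rintro _ _ ⟨a, rfl⟩ ⟨b, rfl⟩
        exact ⟨a * b, (hdeg a b)⟩
      neg_mem' := by
        rintro _ ⟨a, rfl⟩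
        exact ⟨a⁻¹, hinv a⟩ }
  obtain ⟨d, hd⟩ := Int.subgroup_cyclic D
  have hdmem : d ∈ D := by rw [hd]; exact AddSubgroup.subset_closure rfl
  obtain ⟨g₀, hg₀⟩ : ∃ g, deg g = d := hdmem
  have hdvd0 : ∀ g : G, d ∣ deg g := by
    intro g
    have : deg g ∈ D := ⟨g, rfl⟩
    rw [hd, AddSubgroup.mem_closure_singleton] at this
    obtain ⟨n, hn⟩ := this
    exact ⟨n, by rw [← hn, smul_eq_mul]; ring⟩
  -- normalize to a nonnegative generator
  obtain ⟨g₁, hg₁nonneg, hdvd⟩ : ∃ g₁ : G, 0 ≤ deg g₁ ∧ ∀ g : G, deg g₁ ∣ deg g := by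
    rcases le_or_gt 0 d with h | h
    · exact ⟨g₀, by omega, by rw [hg₀]; exact hdvd0⟩
    · refine ⟨g₀⁻¹, by rw [hinv, hg₀]; omega, ?_⟩
      intro g
      rw [hinv, hg₀]
      exact neg_dvd.mpr (hdvd0 g)
  set e := deg g₁ with he
  rcases eq_or_lt_of_le hg₁nonneg with h0 | hepos
  · -- e = 0 : every degree is 0
    refine ⟨1, m, hmpos, fun g => ?_⟩
    have hg : deg g = 0 := by
      obtain ⟨c, hc⟩ := hdvd g
      rw [← h0, zero_mul] at hc
      exact hc
    rw [one_zpow, mul_one, ← map_pow, hmkill g hg, map_one]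
  · -- e > 0
    obtain ⟨b, hb⟩ := IsAlgClosed.exists_pow_nat_eq
      ((algebraMap K L) ((χ g₁)⁻¹ : Kˣ)) (n := e.toNat) (by omega)
    have hbne : b ≠ 0 := by
      intro hb0
      rw [hb0, zero_pow (by omega)] at hb
      have : (((ι (χ g₁))⁻¹ : Lˣ) : L) = (algebraMap K L) ((χ g₁)⁻¹ : Kˣ) := by
        rw [← map_inv]; rfl
      rw [← hb] at this
      exact Units.ne_zero _ this
    set a : Lˣ := Units.mk0 b hbne with haa
    have ha : a ^ e.toNat = (ι (χ g₁))⁻¹ := by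
      rw [← map_inv]
      ext
      rw [Units.val_pow_eq_pow_val, haa, Units.val_mk0, hb]
      rfl
    have hae : a ^ (e : ℤ) = (ι (χ g₁))⁻¹ := by
      rw [show (e : ℤ) = ((e.toNat : ℕ) : ℤ) by omega, zpow_natCast, ha]
    refine ⟨a, m, hmpos, fun g => ?_⟩
    obtain ⟨k, hk⟩ := hdvd g
    have hu : deg (g * g₁ ^ (-k)) = 0 := by
      rw [hdeg, hzpow, hk, ← he]; ring
    set u := χ (g * g₁ ^ (-k)) with huu
    have hχg : χ g = u * (χ g₁) ^ k := by
      have hgg : (g * g₁ ^ (-k)) * g₁ ^ k = g := by group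
      calc χ g = χ ((g * g₁ ^ (-k)) * g₁ ^ k) := by rw [hgg]
        _ = u * (χ g₁) ^ k := by rw [map_mul, map_zpow]
    have hadeg : a ^ deg g = ((ι (χ g₁))⁻¹) ^ k := by
      rw [hk, zpow_mul, hae]
    rw [hχg, map_mul, map_zpow, hadeg]
    have hcancel : ι u * ι (χ g₁) ^ k * (ι (χ g₁))⁻¹ ^ k = ι u := by
      rw [inv_zpow, mul_assoc, mul_inv_cancel, mul_one]
    rw [hcancel, ← map_pow, hmkill _ hu, map_one]
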